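/- arXiv:1807.02702 — 2 statements merged into one kernel-verified Lean document; each statement's English description precedes it below -/
import Mathlib

section
/- On the set S̃• of (finite or infinite) rooted permutations, the local distance d((A₁,≼₁),(A₂,≼₂)) = 2^{−sup{h ∈ ℤ_{>0} : r_h(A₁,≼₁) = r_h(A₂,≼₂)}} (with conventions sup∅ = 0, sup ℤ_{>0} = +∞ and 2^{−∞} = 0) is a metric, and the metric space (S̃•, d) is compact. -/
open Filter
open scoped Topology Classical

noncomputable section

/-- A (finite or infinite) **rooted permutation**: a pair `(A,≼)` where `A ⊆ ℤ` is an
integer interval containing `0` and `≼` is a total order on `A`.  The order is encoded by a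
relation `r` on `ℤ` supported on `A` which is reflexive, antisymmetric, transitive and total
on `A`. -/
structure RootedPerm where
  A : Set ℤ
  mem0 : 0 ∈ A
  conn : ∀ {x y z : ℤ}, x ∈ A → z ∈ A → x ≤ y → y ≤ z → y ∈ A
  r : ℤ → ℤ → Prop
  supp : ∀ {x y : ℤ}, r x y → x ∈ A ∧ y ∈ A
  refl : ∀ {x : ℤ}, x ∈ A → r x x
  antisymm : ∀ {x y : ℤ}, r x y → r y x → x = y
  trans : ∀ {x y z : ℤ}, r x y → r y z → r x z
  total : ∀ {x y : ℤ}, x ∈ A → y ∈ A → r x y ∨ r y x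

/-- The restriction `r_h(A,≼) = (A ∩ [−h,h], ≼)` around the root. -/
def RootedPerm.restrict (h : ℕ) (P : RootedPerm) : RootedPerm where
  A := P.A ∩ Set.Icc (-(h : ℤ)) (h : ℤ)
  mem0 := ⟨P.mem0, by simp only [Set.mem_Icc]; omega⟩
  conn := by
    intro x y z hx hz hxy hyz
    refine ⟨P.conn hx.1 hz.1 hxy hyz, ?_⟩
    have hx2 := hx.2
    have hz2 := hz.2
    simp only [Set.mem_Icc] at *
    omega
  r := fun x y => P.r x y ∧ x ∈ Set.Icc (-(h : ℤ)) (h : ℤ) ∧ y ∈ Set.Icc (-(h : ℤ)) (h : ℤ)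
  supp := by
    intro x y hxy
    exact ⟨⟨(P.supp hxy.1).1, hxy.2.1⟩, ⟨(P.supp hxy.1).2, hxy.2.2⟩⟩
  refl := fun hx => ⟨P.refl hx.1, hx.2, hx.2⟩
  antisymm := fun hxy hyx => P.antisymm hxy.1 hyx.1
  trans := fun hxy hyz => ⟨P.trans hxy.1 hyz.1, hxy.2.1, hyz.2.2⟩
  total := by
    intro x y hx hy
    rcases P.total hx.1 hy.1 with h' | h'
    · exact Or.inl ⟨h', hx.2, hy.2⟩
    · exact Or.inr ⟨h', hy.2, hx.2⟩

/-- The local distance `d((A₁,≼₁),(A₂,≼₂)) = 2^(−sup{h ≥ 1 : r_h(A₁,≼₁) = r_h(A₂,≼₂)})`,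
with the conventions `sup ∅ = 0`, `sup ℤ_{>0} = +∞`, `2^(−∞) = 0`. -/
def localDist (P Q : RootedPerm) : ℝ :=
  if ∀ h : ℕ, 1 ≤ h → RootedPerm.restrict h P = RootedPerm.restrict h Q then 0
  else (2 : ℝ)⁻¹ ^ sSup {h : ℕ | 1 ≤ h ∧ RootedPerm.restrict h P = RootedPerm.restrict h Q}

end

section Aux

lemma RootedPerm.ext' {P Q : RootedPerm} (hA : P.A = Q.A) (hr : P.r = Q.r) : P = Q := by
  cases P; cases Q; cases hA; cases hr; rfl

lemma restrict_eq_iff {P Q : RootedPerm} {h : ℕ} :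
    RootedPerm.restrict h P = RootedPerm.restrict h Q ↔
      ((∀ x : ℤ, x ∈ Set.Icc (-(h : ℤ)) (h : ℤ) → (x ∈ P.A ↔ x ∈ Q.A)) ∧
       (∀ x y : ℤ, x ∈ Set.Icc (-(h : ℤ)) (h : ℤ) → y ∈ Set.Icc (-(h : ℤ)) (h : ℤ) →
          (P.r x y ↔ Q.r x y))) := by
  constructor
  · intro he
    have hA : P.A ∩ Set.Icc (-(h : ℤ)) (h : ℤ) = Q.A ∩ Set.Icc (-(h : ℤ)) (h : ℤ) :=
      congrArg RootedPerm.A he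
    have hr := congrArg RootedPerm.r he
    constructor
    · intro x hx
      have := Set.ext_iff.mp hA x
      simp only [Set.mem_inter_iff] at this
      tauto
    · intro x y hx hy
      have := congrFun (congrFun hr x) y
      simp only [RootedPerm.restrict] at this
      rw [eq_iff_iff] at this
      tauto
  · rintro ⟨hA, hr⟩
    apply RootedPerm.ext'
    · ext x
      simp only [RootedPerm.restrict, Set.mem_inter_iff]
      constructor
      · rintro ⟨h1, h2⟩; exact ⟨(hA x h2).mp h1, h2⟩
      · rintro ⟨h1, h2⟩; exact ⟨(hA x h2).mpr h1, h2⟩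
    · funext x y
      simp only [RootedPerm.restrict]
      apply propext
      constructor
      · rintro ⟨h1, h2, h3⟩; exact ⟨(hr x y h2 h3).mp h1, h2, h3⟩
      · rintro ⟨h1, h2, h3⟩; exact ⟨(hr x y h2 h3).mpr h1, h2, h3⟩

lemma restrict_mono {P Q : RootedPerm} {k h : ℕ} (hk : k ≤ h)
    (he : RootedPerm.restrict h P = RootedPerm.restrict h Q) :
    RootedPerm.restrict k P = RootedPerm.restrict k Q := by
  rw [restrict_eq_iff] at he ⊢
  have hsub : ∀ x : ℤ, x ∈ Set.Icc (-(k : ℤ)) (k : ℤ) → x ∈ Set.Icc (-(h : ℤ)) (h : ℤ) := by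
    intro x hx; simp only [Set.mem_Icc] at *; omega
  exact ⟨fun x hx => he.1 x (hsub x hx),
    fun x y hx hy => he.2 x y (hsub x hx) (hsub y hy)⟩

lemma eq_of_forall_restrict {P Q : RootedPerm}
    (h : ∀ h : ℕ, 1 ≤ h → RootedPerm.restrict h P = RootedPerm.restrict h Q) : P = Q := by
  apply RootedPerm.ext'
  · ext x
    exact (restrict_eq_iff.mp (h (x.natAbs + 1) (by omega))).1 x
      (by simp only [Set.mem_Icc]; omega)
  · funext x y
    apply propext
    exact (restrict_eq_iff.mp (h (x.natAbs + y.natAbs + 1) (by omega))).2 x y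
      (by simp only [Set.mem_Icc]; omega) (by simp only [Set.mem_Icc]; omega)

lemma localDist_self (P : RootedPerm) : localDist P P = 0 := by
  simp [localDist]

lemma localDist_comm (P Q : RootedPerm) : localDist P Q = localDist Q P := by
  have h1 : ∀ h : ℕ, (RootedPerm.restrict h P = RootedPerm.restrict h Q) =
      (RootedPerm.restrict h Q = RootedPerm.restrict h P) := fun h => propext eq_comm
  unfold localDist
  simp only [h1]

lemma localDist_nonneg (P Q : RootedPerm) : 0 ≤ localDist P Q := by
  unfold localDist
  split_ifs
  · exact le_rfl
  · positivity

lemma localDist_le_iff {P Q : RootedPerm} {k : ℕ} :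
    localDist P Q ≤ (2 : ℝ)⁻¹ ^ k ↔
      ∀ h : ℕ, 1 ≤ h → h ≤ k → RootedPerm.restrict h P = RootedPerm.restrict h Q := by
  unfold localDist
  split_ifs with hall
  · constructor
    · intro _ h h1 _; exact hall h h1
    · intro _; positivity
  · push_neg at hall
    obtain ⟨h0, h01, h0ne⟩ := hall
    set S := {h : ℕ | 1 ≤ h ∧ RootedPerm.restrict h P = RootedPerm.restrict h Q} with hSdef
    have hbdd : BddAbove S := by
      refine ⟨h0, fun h hh => ?_⟩
      by_contra hlt
      push_neg at hlt
      exact h0ne (restrict_mono (le_of_lt hlt) hh.2)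
    have hanti := pow_right_strictAnti₀ (by norm_num : (0:ℝ) < 2⁻¹) (by norm_num : (2:ℝ)⁻¹ < 1)
    constructor
    · intro hle h h1 hk
      have hkN : k ≤ sSup S := by
        have := hanti.le_iff_ge.mp hle
        exact this
      have hNpos : 1 ≤ sSup S := le_trans h1 (le_trans hk hkN)
      have hSne : S.Nonempty := by
        by_contra hemp
        rw [Set.not_nonempty_iff_eq_empty] at hemp
        rw [hemp] at hNpos
        simp at hNpos
      have hmem : sSup S ∈ S := Nat.sSup_mem hSne hbdd
      exact restrict_mono (le_trans hk hkN) hmem.2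
    · intro hag
      rcases Nat.eq_zero_or_pos k with hk0 | hk1
      · subst hk0
        simpa using pow_le_one₀ (by norm_num : (0:ℝ) ≤ 2⁻¹) (by norm_num : (2:ℝ)⁻¹ ≤ 1)
      · have hkS : k ∈ S := ⟨hk1, hag k hk1 le_rfl⟩
        have : k ≤ sSup S := le_csSup hbdd hkS
        exact hanti.le_iff_ge.mpr this

lemma localDist_eq_zero_iff {P Q : RootedPerm} : localDist P Q = 0 ↔ P = Q := by
  constructor
  · intro h
    unfold localDist at h
    split_ifs at h with hall
    · exact eq_of_forall_restrict hall
    · exact absurd h (by positivity)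
  · rintro rfl; exact localDist_self P

lemma localDist_form (P Q : RootedPerm) :
    localDist P Q = 0 ∨ ∃ N : ℕ, localDist P Q = (2 : ℝ)⁻¹ ^ N := by
  unfold localDist
  split_ifs
  · exact Or.inl rfl
  · exact Or.inr ⟨_, rfl⟩

lemma localDist_triangle (P Q R : RootedPerm) :
    localDist P R ≤ localDist P Q + localDist Q R := by
  rcases eq_or_ne (localDist P Q) 0 with h1 | h1
  · obtain rfl : P = Q := localDist_eq_zero_iff.mp h1
    rw [h1, zero_add]
  rcases eq_or_ne (localDist Q R) 0 with h2 | h2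
  · obtain rfl : Q = R := localDist_eq_zero_iff.mp h2
    rw [h2, add_zero]
  obtain ⟨N1, e1⟩ := (localDist_form P Q).resolve_left h1
  obtain ⟨N2, e2⟩ := (localDist_form Q R).resolve_left h2
  have a1 := localDist_le_iff.mp (le_of_eq e1)
  have a2 := localDist_le_iff.mp (le_of_eq e2)
  have key : localDist P R ≤ (2 : ℝ)⁻¹ ^ (min N1 N2) := by
    apply localDist_le_iff.mpr
    intro h hh1 hhk
    exact (a1 h hh1 (le_trans hhk (min_le_left _ _))).trans
      (a2 h hh1 (le_trans hhk (min_le_right _ _)))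
  rcases min_choice N1 N2 with hm | hm
  · calc localDist P R ≤ (2 : ℝ)⁻¹ ^ (min N1 N2) := key
      _ = localDist P Q := by rw [hm, e1]
      _ ≤ localDist P Q + localDist Q R := le_add_of_nonneg_right (localDist_nonneg _ _)
  · calc localDist P R ≤ (2 : ℝ)⁻¹ ^ (min N1 N2) := key
      _ = localDist Q R := by rw [hm, e2]
      _ ≤ localDist P Q + localDist Q R := le_add_of_nonneg_left (localDist_nonneg _ _)

noncomputable instance instMetricRootedPerm : MetricSpace RootedPerm where
  dist := localDist
  dist_self := localDist_self
  dist_comm := localDist_comm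
  dist_triangle := localDist_triangle
  eq_of_dist_eq_zero := fun h => localDist_eq_zero_iff.mp h

end Aux

section Compact

lemma dist_eq_localDist (P Q : RootedPerm) : dist P Q = localDist P Q := rfl

lemma totallyBounded_univ_rp : TotallyBounded (Set.univ : Set RootedPerm) := by
  apply Metric.totallyBounded_of_finite_discretization
  intro ε hε
  obtain ⟨k, hk⟩ := exists_pow_lt_of_lt_one hε (by norm_num : (2 : ℝ)⁻¹ < 1)
  refine ⟨(Set.Icc (-(k : ℤ)) (k : ℤ) → Prop) ×
      (Set.Icc (-(k : ℤ)) (k : ℤ) → Set.Icc (-(k : ℤ)) (k : ℤ) → Prop), inferInstance,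
    fun P => (fun x => (x : ℤ) ∈ P.1.A, fun x y => P.1.r x y), ?_⟩
  intro P Q hPQ
  have h1 := congrArg Prod.fst hPQ
  have h2 := congrArg Prod.snd hPQ
  have hres : RootedPerm.restrict k P.1 = RootedPerm.restrict k Q.1 := by
    apply restrict_eq_iff.mpr
    constructor
    · intro x hx
      have := congrFun h1 ⟨x, hx⟩
      simp only [eq_iff_iff] at this
      exact this
    · intro x y hx hy
      have := congrFun (congrFun h2 ⟨x, hx⟩) ⟨y, hy⟩
      simp only [eq_iff_iff] at this
      exact this
  calc dist P.1 Q.1 ≤ (2 : ℝ)⁻¹ ^ k := by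
        rw [dist_eq_localDist]
        exact localDist_le_iff.mpr fun h hh1 hhk => restrict_mono hhk hres
    _ < ε := hk

/-- The candidate limit of a sequence of rooted permutations: eventual membership and
eventual order.  The `total` axiom is supplied as a hypothesis. -/
def rpLimit (u : ℕ → RootedPerm)
    (hst : ∀ x y : ℤ, (∀ᶠ n in atTop, x ∈ (u n).A) → (∀ᶠ n in atTop, y ∈ (u n).A) →
      (∀ᶠ n in atTop, (u n).r x y) ∨ (∀ᶠ n in atTop, (u n).r y x)) : RootedPerm where
  A := {x : ℤ | ∀ᶠ n in atTop, x ∈ (u n).A}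
  mem0 := Filter.Eventually.of_forall fun n => (u n).mem0
  conn := by
    intro x y z hx hz hxy hyz
    filter_upwards [hx, hz] with n hxn hzn
    exact (u n).conn hxn hzn hxy hyz
  r := fun x y => ∀ᶠ n in atTop, (u n).r x y
  supp := by
    intro x y hr
    constructor
    · filter_upwards [hr] with n hn; exact ((u n).supp hn).1
    · filter_upwards [hr] with n hn; exact ((u n).supp hn).2
  refl := by
    intro x hx
    filter_upwards [hx] with n hn; exact (u n).refl hn
  antisymm := by
    intro x y h1 h2
    obtain ⟨n, hn1, hn2⟩ := (h1.and h2).exists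
    exact (u n).antisymm hn1 hn2
  trans := by
    intro x y z h1 h2
    filter_upwards [h1, h2] with n hn1 hn2
    exact (u n).trans hn1 hn2
  total := fun hx hy => hst _ _ hx hy

lemma rpLimit_mem_iff (u : ℕ → RootedPerm) (hst) (x : ℤ) :
    x ∈ (rpLimit u hst).A ↔ ∀ᶠ n in atTop, x ∈ (u n).A := Iff.rfl

lemma rpLimit_r_iff (u : ℕ → RootedPerm) (hst) (x y : ℤ) :
    (rpLimit u hst).r x y ↔ ∀ᶠ n in atTop, (u n).r x y := Iff.rfl

instance : CompleteSpace RootedPerm := by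
  apply Metric.complete_of_cauchySeq_tendsto
  intro u hu
  have key : ∀ h : ℕ, ∃ N : ℕ, ∀ m n, N ≤ m → N ≤ n →
      ∀ k, 1 ≤ k → k ≤ h → RootedPerm.restrict k (u m) = RootedPerm.restrict k (u n) := by
    intro h
    obtain ⟨N, hN⟩ := Metric.cauchySeq_iff.mp hu ((2 : ℝ)⁻¹ ^ h) (by positivity)
    refine ⟨N, fun m n hm hn k hk1 hkh => ?_⟩
    have := le_of_lt (hN m hm n hn)
    rw [dist_eq_localDist] at this
    exact localDist_le_iff.mp this k hk1 hkh
  choose φ hφ using key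
  -- transfer of membership/order between stabilized indices
  have memtr : ∀ (h : ℕ) (m n : ℕ), 1 ≤ h → φ h ≤ m → φ h ≤ n →
      ∀ x ∈ Set.Icc (-(h : ℤ)) (h : ℤ), x ∈ (u m).A → x ∈ (u n).A := by
    intro h m n h1 hm hn x hx hxm
    exact ((restrict_eq_iff.mp (hφ h m n hm hn h h1 le_rfl)).1 x hx).mp hxm
  have rtr : ∀ (h : ℕ) (m n : ℕ), 1 ≤ h → φ h ≤ m → φ h ≤ n →
      ∀ x ∈ Set.Icc (-(h : ℤ)) (h : ℤ), ∀ y ∈ Set.Icc (-(h : ℤ)) (h : ℤ),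
        (u m).r x y → (u n).r x y := by
    intro h m n h1 hm hn x hx y hy hr
    exact ((restrict_eq_iff.mp (hφ h m n hm hn h h1 le_rfl)).2 x y hx hy).mp hr
  have hst : ∀ x y : ℤ, (∀ᶠ n in atTop, x ∈ (u n).A) → (∀ᶠ n in atTop, y ∈ (u n).A) →
      (∀ᶠ n in atTop, (u n).r x y) ∨ (∀ᶠ n in atTop, (u n).r y x) := by
    intro x y hx hy
    set h : ℕ := max x.natAbs y.natAbs + 1 with hdef
    have hxI : x ∈ Set.Icc (-(h : ℤ)) (h : ℤ) := by simp only [Set.mem_Icc, hdef]; omega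
    have hyI : y ∈ Set.Icc (-(h : ℤ)) (h : ℤ) := by simp only [Set.mem_Icc, hdef]; omega
    obtain ⟨n0, ⟨hxn0, hyn0⟩, hn0ge⟩ := ((hx.and hy).and (eventually_ge_atTop (φ h))).exists
    rcases (u n0).total hxn0 hyn0 with hr | hr
    · left
      filter_upwards [eventually_ge_atTop (φ h)] with n hn
      exact rtr h n0 n (by omega) hn0ge hn x hxI y hyI hr
    · right
      filter_upwards [eventually_ge_atTop (φ h)] with n hn
      exact rtr h n0 n (by omega) hn0ge hn y hyI x hxI hr
  refine ⟨rpLimit u hst, ?_⟩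
  rw [Metric.tendsto_atTop]
  intro ε hε
  obtain ⟨h, hhε⟩ := exists_pow_lt_of_lt_one hε (by norm_num : (2 : ℝ)⁻¹ < 1)
  refine ⟨φ (h + 1), fun n hn => ?_⟩
  have hres : ∀ k, 1 ≤ k → k ≤ h + 1 →
      RootedPerm.restrict k (u n) = RootedPerm.restrict k (rpLimit u hst) := by
    intro k hk1 hkh
    have hIsub : ∀ x : ℤ, x ∈ Set.Icc (-(k : ℤ)) (k : ℤ) →
        x ∈ Set.Icc (-((h + 1 : ℕ) : ℤ)) ((h + 1 : ℕ) : ℤ) := by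
      intro x hx; simp only [Set.mem_Icc] at *; omega
    apply restrict_eq_iff.mpr
    constructor
    · intro x hx
      have hxI := hIsub x hx
      rw [rpLimit_mem_iff]
      constructor
      · intro hxn
        filter_upwards [eventually_ge_atTop (φ (h + 1))] with m hm
        exact memtr (h + 1) n m (by omega) hn hm x hxI hxn
      · intro hev
        obtain ⟨m, hxm, hmge⟩ := (hev.and (eventually_ge_atTop (φ (h + 1)))).exists
        exact memtr (h + 1) m n (by omega) hmge hn x hxI hxm
    · intro x y hx hy
      have hxI := hIsub x hx
      have hyI := hIsub y hy
      rw [rpLimit_r_iff]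
      constructor
      · intro hr
        filter_upwards [eventually_ge_atTop (φ (h + 1))] with m hm
        exact rtr (h + 1) n m (by omega) hn hm x hxI y hyI hr
      · intro hev
        obtain ⟨m, hrm, hmge⟩ := (hev.and (eventually_ge_atTop (φ (h + 1)))).exists
        exact rtr (h + 1) m n (by omega) hmge hn x hxI y hyI hrm
  have : dist (u n) (rpLimit u hst) ≤ (2 : ℝ)⁻¹ ^ (h + 1) := by
    rw [dist_eq_localDist]
    exact localDist_le_iff.mpr hres
  calc dist (u n) (rpLimit u hst) ≤ (2 : ℝ)⁻¹ ^ (h + 1) := this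
    _ ≤ (2 : ℝ)⁻¹ ^ h := pow_le_pow_of_le_one (by norm_num) (by norm_num) (by omega)
    _ < ε := hhε

instance : CompactSpace RootedPerm := by
  rw [← isCompact_univ_iff]
  exact isCompact_iff_totallyBounded_isComplete.mpr
    ⟨totallyBounded_univ_rp, completeSpace_iff_isComplete_univ.mp inferInstance⟩

end Compact

/-- **Theorem 2.12 (and preceding discussion).** The local distance `d` is a metric on the
set of (finite or infinite) rooted permutations, and the resulting metric space is compact. -/
theorem localDist_metricSpace_compact :
    ∃ m : MetricSpace RootedPerm,
      (∀ P Q : RootedPerm, m.toDist.dist P Q = localDist P Q) ∧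
      @CompactSpace RootedPerm m.toUniformSpace.toTopologicalSpace :=
  ⟨instMetricRootedPerm, fun _ _ => rfl, inferInstance⟩
end

section
/- Let μ be a shift-invariant probability measure on the set LO(ℤ) of linear orders on ℤ, i.e., μ(O^s(π)) = μ(O(π)) for every finite permutation π and every s ∈ ℤ. Then for every h ≥ 1, every permutation π of size 2h+1, and every n ≥ 2h+1: Σ_{ρ ∈ Sⁿ} μ(O(ρ)) · c-occ(π, ρ⁻¹) = (n − 2h) · μ(O^{−(h+1)}(π⁻¹)), where the sum ranges over all permutations ρ of size n. -/
open Finset Filter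
open scoped Topology Classical

noncomputable section

/-- The permutation 231 (as a permutation of `Fin 3`, 0-indexed). -/
def perm231 : Equiv.Perm (Fin 3) := ⟨![1, 2, 0], ![2, 0, 1], by decide, by decide⟩

/-- The permutation 321 (as a permutation of `Fin 3`, 0-indexed). -/
def perm321 : Equiv.Perm (Fin 3) := ⟨![2, 1, 0], ![2, 1, 0], by decide, by decide⟩

/-- `σ` contains the pattern `π`: some (not necessarily consecutive) subsequence of `σ`
is in the same relative order as `π`. -/
def Contains {k n : ℕ} (π : Equiv.Perm (Fin k)) (σ : Equiv.Perm (Fin n)) : Prop :=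
  ∃ f : Fin k → Fin n, StrictMono f ∧ ∀ a b : Fin k, σ (f a) < σ (f b) ↔ π a < π b

/-- `σ` avoids the pattern `π`. -/
def Avoids {k n : ℕ} (π : Equiv.Perm (Fin k)) (σ : Equiv.Perm (Fin n)) : Prop := ¬ Contains π σ

/-- The set `Avⁿ(ρ)` of `ρ`-avoiding permutations of size `n`. -/
def AvSet {k : ℕ} (ρ : Equiv.Perm (Fin k)) (n : ℕ) : Finset (Equiv.Perm (Fin n)) :=
  Finset.univ.filter fun σ => Avoids ρ σ

/-- The (0-indexed) value of `σ` at the (0-indexed) position `j`, with junk value `0`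
out of range. -/
def pv {n : ℕ} (σ : Equiv.Perm (Fin n)) (j : ℕ) : ℕ :=
  if h : j < n then (σ ⟨j, h⟩ : ℕ) else 0

/-- The length-`k` window of `σ` starting at the (0-indexed) position `i` is in the same
relative order as `π`, i.e. `pat_{[i+1,i+k]}(σ) = π` (in the 1-indexed notation). -/
def WindowMatch {k n : ℕ} (π : Equiv.Perm (Fin k)) (σ : Equiv.Perm (Fin n)) (i : ℕ) : Prop :=
  ∀ a b : Fin k, (pv σ (i + a) < pv σ (i + b) ↔ π a < π b)

/-- `π` occurs consecutively in `σ` at the (0-indexed) position `i`. -/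
def IsOccAt {k n : ℕ} (π : Equiv.Perm (Fin k)) (σ : Equiv.Perm (Fin n)) (i : ℕ) : Prop :=
  i + k ≤ n ∧ WindowMatch π σ i

/-- Number of consecutive occurrences of `π` in the (0-indexed) window `[lo, hi)` of `σ`.
This equals `c-occ(π, pat_{[lo+1,hi]}(σ))` in the notation of the paper. -/
def cOccWin {k n : ℕ} (π : Equiv.Perm (Fin k)) (σ : Equiv.Perm (Fin n)) (lo hi : ℕ) : ℕ :=
  ((Finset.range n).filter fun i => lo ≤ i ∧ i + k ≤ hi ∧ WindowMatch π σ i).card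

/-- `c-occ(π,σ)`: the number of consecutive occurrences of `π` in `σ`. -/
def cOcc {k n : ℕ} (π : Equiv.Perm (Fin k)) (σ : Equiv.Perm (Fin n)) : ℕ := cOccWin π σ 0 n

/-- `|LRMax(π)|`: the number of left-to-right maxima of `π`. -/
def lrMax {k : ℕ} (π : Equiv.Perm (Fin k)) : ℕ :=
  (Finset.univ.filter fun i : Fin k => ∀ j : Fin k, j < i → π j < π i).card

/-- `|RLMax(π)|`: the number of right-to-left maxima of `π`. -/
def rlMax {k : ℕ} (π : Equiv.Perm (Fin k)) : ℕ :=
  (Finset.univ.filter fun i : Fin k => ∀ j : Fin k, i < j → π j < π i).card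

/-- `P_231(π) = 2^(|LRMax(π)| + |RLMax(π)|) / 2^(2|π|)`. -/
def P231 {k : ℕ} (π : Equiv.Perm (Fin k)) : ℝ :=
  2 ^ (lrMax π + rlMax π) / 2 ^ (2 * k)

end

open MeasureTheory
open scoped ENNReal

/-- `f : ℤ → ℤ → Bool` encodes a linear (total) order on `ℤ`. -/
def IsLinOrdB (f : ℤ → ℤ → Bool) : Prop :=
  (∀ x, f x x = true) ∧ (∀ x y, f x y = true → f y x = true → x = y) ∧
  (∀ x y z, f x y = true → f y z = true → f x z = true) ∧
  (∀ x y, f x y = true ∨ f y x = true)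

/-- The set `LO(ℤ)` of linear orders on `ℤ`, as a (measurable) subtype of the product
space `{0,1}^(ℤ×ℤ)` with the product σ-algebra. -/
abbrev LinOrdZ : Type := {f : ℤ → ℤ → Bool // IsLinOrdB f}

/-- The cylinder event `O^s(π) = {≼ : π₁+s ≼ π₂+s ≼ ⋯ ≼ π_k+s}` (here `π` is 0-indexed,
so its 1-indexed values are `π i + 1`). -/
def Oset {k : ℕ} (π : Equiv.Perm (Fin k)) (s : ℤ) : Set LinOrdZ :=
  {f | ∀ (i : ℕ) (h : i + 1 < k),
    f.1 (((π ⟨i, by omega⟩ : Fin k) : ℤ) + 1 + s) (((π ⟨i + 1, h⟩ : Fin k) : ℤ) + 1 + s)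
      = true}


section AuxProof

lemma perm_apply_inv_self' {α : Type*} (f : Equiv.Perm α) (x : α) : f (f⁻¹ x) = x :=
  f.apply_symm_apply x

lemma perm_inv_apply_self' {α : Type*} (f : Equiv.Perm α) (x : α) : f⁻¹ (f x) = x :=
  f.symm_apply_apply x

open Finset

/-- Rank of a value `v` in the linear order `f` (restricted to the window `[1,n]`,
0-indexed by `Fin n`, value `v` encoded as the integer `v+1`). -/
def rkAux {n : ℕ} (f : LinOrdZ) (v : Fin n) : ℕ :=
  (Finset.univ.filter fun w : Fin n => f.1 ((w : ℤ) + 1) ((v : ℤ) + 1) = true).card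

lemma rkAux_le_iff {n : ℕ} (f : LinOrdZ) (v w : Fin n) :
    rkAux f v ≤ rkAux f w ↔ f.1 ((v : ℤ) + 1) ((w : ℤ) + 1) = true := by
  obtain ⟨hrefl, hanti, htrans, htot⟩ := f.2
  constructor
  · intro hle
    by_contra hvw
    rcases htot ((v : ℤ) + 1) ((w : ℤ) + 1) with hc | hc
    · exact hvw hc
    · have hsub : (Finset.univ.filter fun u : Fin n => f.1 ((u : ℤ) + 1) ((w : ℤ) + 1) = true)
          ⊂ (Finset.univ.filter fun u : Fin n => f.1 ((u : ℤ) + 1) ((v : ℤ) + 1) = true) := by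
        refine (Finset.ssubset_iff_of_subset ?_).2 ?_
        · intro u hu
          simp only [Finset.mem_filter, Finset.mem_univ, true_and] at hu ⊢
          exact htrans _ _ _ hu hc
        · exact ⟨v, by simp [hrefl], by simp [hvw]⟩
      have hcard := Finset.card_lt_card hsub
      rw [rkAux, rkAux] at hle
      omega
  · intro hvw
    apply Finset.card_le_card
    intro u hu
    simp only [Finset.mem_filter, Finset.mem_univ, true_and] at hu ⊢
    exact htrans _ _ _ hu hvw

lemma rkAux_injective {n : ℕ} (f : LinOrdZ) : Function.Injective (rkAux f (n := n)) := by
  intro v w hvw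
  obtain ⟨hrefl, hanti, htrans, htot⟩ := f.2
  have h1 := (rkAux_le_iff f v w).1 hvw.le
  have h2 := (rkAux_le_iff f w v).1 hvw.ge
  have h3 := hanti _ _ h1 h2
  have h4 : (v : ℕ) = (w : ℕ) := by omega
  exact Fin.ext h4

/-- A convenient introduction rule for `Oset` membership (with arbitrary proof terms). -/
lemma mem_Oset_of {k : ℕ} (τ : Equiv.Perm (Fin k)) (s : ℤ) (f : LinOrdZ)
    (H : ∀ (j : ℕ) (hj1 : j < k) (hj2 : j + 1 < k),
      f.1 ((τ ⟨j, hj1⟩ : ℤ) + 1 + s) ((τ ⟨j + 1, hj2⟩ : ℤ) + 1 + s) = true) :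
    f ∈ Oset τ s :=
  fun j hj => H j (by omega) hj

/-- Transitive chain along an `Oset` event. -/
lemma chain_of_mem_Oset {k : ℕ} {τ : Equiv.Perm (Fin k)} {s : ℤ} {f : LinOrdZ}
    (hf : f ∈ Oset τ s) :
    ∀ (b : ℕ) (hb : b < k) (a : ℕ) (hab : a ≤ b),
      f.1 ((τ ⟨a, lt_of_le_of_lt hab hb⟩ : ℤ) + 1 + s) ((τ ⟨b, hb⟩ : ℤ) + 1 + s) = true := by
  obtain ⟨hrefl, hanti, htrans, htot⟩ := f.2
  intro b
  induction b with
  | zero =>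
    intro hb a hab
    obtain rfl : a = 0 := Nat.le_zero.1 hab
    exact hrefl _
  | succ b ih =>
    intro hb a hab
    by_cases hab' : a = b + 1
    · subst hab'; exact hrefl _
    · have ha : a ≤ b := by omega
      have hbk : b < k := by omega
      exact htrans _ _ _ (ih hbk a ha) (hf b hb)

lemma le_of_pos_le {n : ℕ} {ρ : Equiv.Perm (Fin n)} {f : LinOrdZ} (hf : f ∈ Oset ρ 0)
    {a b : Fin n} (hab : a ≤ b) :
    f.1 ((ρ a : ℤ) + 1) ((ρ b : ℤ) + 1) = true := by
  have hch := chain_of_mem_Oset hf (b : ℕ) b.isLt (a : ℕ) hab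
  simpa using hch

lemma strictMono_rkAux_comp {n : ℕ} {ρ : Equiv.Perm (Fin n)} {f : LinOrdZ}
    (hf : f ∈ Oset ρ 0) : StrictMono (rkAux f ∘ ρ) := by
  have hmono : Monotone (rkAux f ∘ ρ) := fun a b hab =>
    (rkAux_le_iff f _ _).2 (le_of_pos_le hf hab)
  exact hmono.strictMono_of_injective ((rkAux_injective f).comp ρ.injective)

lemma Oset_unique {n : ℕ} {ρ ρ' : Equiv.Perm (Fin n)} {f : LinOrdZ}
    (hf : f ∈ Oset ρ 0) (hf' : f ∈ Oset ρ' 0) : ρ = ρ' := by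
  have hEq := Tuple.unique_monotone (f := rkAux f)
    (strictMono_rkAux_comp hf).monotone (strictMono_rkAux_comp hf').monotone
  exact Equiv.ext fun x => rkAux_injective f (congrFun hEq x)

lemma measurableSet_Oset {k : ℕ} (τ : Equiv.Perm (Fin k)) (s : ℤ) :
    MeasurableSet (Oset τ s) := by
  have hEq : Oset τ s = ⋂ (i : ℕ) (h : i + 1 < k),
      {f : LinOrdZ |
        f.1 (((τ ⟨i, by omega⟩ : Fin k) : ℤ) + 1 + s) (((τ ⟨i + 1, h⟩ : Fin k) : ℤ) + 1 + s)
          = true} := by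
    ext f
    simp only [Oset, Set.mem_setOf_eq, Set.mem_iInter]
  rw [hEq]
  refine MeasurableSet.iInter fun i => MeasurableSet.iInter fun hik => ?_
  have hm : Measurable fun f : LinOrdZ =>
      f.1 (((τ ⟨i, by omega⟩ : Fin k) : ℤ) + 1 + s) (((τ ⟨i + 1, hik⟩ : Fin k) : ℤ) + 1 + s) :=
    (measurable_pi_apply _).comp ((measurable_pi_apply _).comp measurable_subtype_coe)
  exact hm (measurableSet_singleton true)

lemma key_union {h : ℕ} (π : Equiv.Perm (Fin (2 * h + 1))) {n i : ℕ}
    (hik : i + (2 * h + 1) ≤ n) :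
    (⋃ ρ ∈ (Finset.univ.filter fun ρ : Equiv.Perm (Fin n) => WindowMatch π ρ⁻¹ i),
        Oset ρ 0) = Oset π⁻¹ (i : ℤ) := by
  classical
  ext f
  simp only [Set.mem_iUnion, Finset.mem_filter, Finset.mem_univ, true_and]
  constructor
  · rintro ⟨ρ, hW, hfρ⟩
    apply mem_Oset_of
    intro j hj1 hj2
    set a : Fin (2 * h + 1) := π⁻¹ ⟨j, hj1⟩ with ha
    set b : Fin (2 * h + 1) := π⁻¹ ⟨j + 1, hj2⟩ with hb
    have hva : i + (a : ℕ) < n := by have := a.isLt; omega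
    have hvb : i + (b : ℕ) < n := by have := b.isLt; omega
    set v : Fin n := ⟨i + (a : ℕ), hva⟩ with hv
    set w : Fin n := ⟨i + (b : ℕ), hvb⟩ with hw
    have hπab : π a < π b := by
      rw [ha, hb]
      simp only [perm_apply_inv_self']
      exact Fin.mk_lt_mk.2 (Nat.lt_succ_self j)
    have hlt : (ρ⁻¹ v : ℕ) < (ρ⁻¹ w : ℕ) := by
      have hWab := (hW a b).2 hπab
      rwa [pv, pv, dif_pos hva, dif_pos hvb] at hWab
    have hle := le_of_pos_le hfρ (le_of_lt (show ρ⁻¹ v < ρ⁻¹ w from hlt))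
    rw [perm_apply_inv_self', perm_apply_inv_self'] at hle
    have e1 : ((v : Fin n) : ℤ) + 1 = (a : ℤ) + 1 + (i : ℤ) := by
      rw [hv]; push_cast [Fin.val_mk]; ring
    have e2 : ((w : Fin n) : ℤ) + 1 = (b : ℤ) + 1 + (i : ℤ) := by
      rw [hw]; push_cast [Fin.val_mk]; ring
    rw [e1, e2] at hle
    exact hle
  · intro hfπ
    set ρ : Equiv.Perm (Fin n) := Tuple.sort (rkAux f) with hρ
    have hmono : Monotone (rkAux f ∘ ρ) := Tuple.monotone_sort (rkAux f)
    have hsm : StrictMono (rkAux f ∘ ρ) :=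
      hmono.strictMono_of_injective ((rkAux_injective f).comp ρ.injective)
    have hfρ : f ∈ Oset ρ 0 := by
      apply mem_Oset_of
      intro j hj1 hj2
      have hle : rkAux f (ρ ⟨j, hj1⟩) ≤ rkAux f (ρ ⟨j + 1, hj2⟩) :=
        hmono (show (⟨j, hj1⟩ : Fin n) ≤ ⟨j + 1, hj2⟩ from Nat.le_succ j)
      have := (rkAux_le_iff f (ρ ⟨j, hj1⟩) (ρ ⟨j + 1, hj2⟩)).1 hle
      simpa using this
    refine ⟨ρ, ?_, hfρ⟩
    intro a b
    have hva : i + (a : ℕ) < n := by have := a.isLt; omega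
    have hvb : i + (b : ℕ) < n := by have := b.isLt; omega
    set v : Fin n := ⟨i + (a : ℕ), hva⟩ with hv
    set w : Fin n := ⟨i + (b : ℕ), hvb⟩ with hw
    have key : ∀ (c d : Fin (2 * h + 1)) (hvc : i + (c : ℕ) < n) (hvd : i + (d : ℕ) < n),
        π c < π d → rkAux f (⟨i + (c : ℕ), hvc⟩ : Fin n) < rkAux f ⟨i + (d : ℕ), hvd⟩ := by
      intro c d hvc hvd hcd
      have hch := chain_of_mem_Oset hfπ ((π d : Fin (2 * h + 1)) : ℕ) (π d).isLt
        ((π c : Fin (2 * h + 1)) : ℕ) (le_of_lt hcd)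
      rw [Fin.eta, Fin.eta, perm_inv_apply_self', perm_inv_apply_self'] at hch
      have e1 : ((c : Fin (2 * h + 1)) : ℤ) + 1 + (i : ℤ)
          = ((⟨i + (c : ℕ), hvc⟩ : Fin n) : ℤ) + 1 := by
        push_cast [Fin.val_mk]; ring
      have e2 : ((d : Fin (2 * h + 1)) : ℤ) + 1 + (i : ℤ)
          = ((⟨i + (d : ℕ), hvd⟩ : Fin n) : ℤ) + 1 := by
        push_cast [Fin.val_mk]; ring
      rw [e1, e2] at hch
      have hle := (rkAux_le_iff f _ _).2 hch
      have hne : (⟨i + (c : ℕ), hvc⟩ : Fin n) ≠ ⟨i + (d : ℕ), hvd⟩ := by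
        intro hEq
        have : (c : ℕ) = (d : ℕ) := by
          have := Fin.mk.injEq (i + (c : ℕ)) hvc (i + (d : ℕ)) hvd ▸ congrArg Fin.val hEq
          omega
        exact absurd (congrArg π (Fin.ext this)) (ne_of_lt hcd)
      exact lt_of_le_of_ne hle fun hrr => hne (rkAux_injective f hrr)
    have h1 : rkAux f (ρ (ρ⁻¹ v)) < rkAux f (ρ (ρ⁻¹ w)) ↔ ρ⁻¹ v < ρ⁻¹ w := hsm.lt_iff_lt
    rw [perm_apply_inv_self', perm_apply_inv_self'] at h1
    rw [pv, pv, dif_pos hva, dif_pos hvb]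
    constructor
    · intro hlt
      have hrk : rkAux f v < rkAux f w := h1.2 (show ρ⁻¹ v < ρ⁻¹ w from hlt)
      rcases lt_trichotomy (π a) (π b) with hc | hc | hc
      · exact hc
      · exfalso
        have : a = b := π.injective hc
        subst this
        exact lt_irrefl _ hrk
      · exfalso
        have := key b a hvb hva hc
        rw [← hv, ← hw] at this
        exact lt_irrefl _ (lt_trans hrk this)
    · intro hab
      have hrk := key a b hva hvb hab
      rw [← hv, ← hw] at hrk
      exact h1.1 hrk

open MeasureTheory in
lemma sum_Oset_eq {h n i : ℕ} (π : Equiv.Perm (Fin (2 * h + 1))) (μ : Measure LinOrdZ)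
    (hik : i + (2 * h + 1) ≤ n) :
    ∑ ρ ∈ (Finset.univ.filter fun ρ : Equiv.Perm (Fin n) => WindowMatch π ρ⁻¹ i),
        μ (Oset ρ 0) = μ (Oset π⁻¹ (i : ℤ)) := by
  rw [← key_union π hik]
  refine (measure_biUnion_finset ?_ fun ρ _ => measurableSet_Oset ρ 0).symm
  intro ρ _ ρ' _ hne
  exact Set.disjoint_left.2 fun f hf hf' => hne (Oset_unique hf hf')

end AuxProof

/-- **Key identity in the proof of Theorem 2.32.** If `μ` is a shift-invariant probability
measure on linear orders on `ℤ`, then for every `h ≥ 1`, every `π` of size `2h+1` and every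
`n ≥ 2h+1`, `Σ_{ρ ∈ Sⁿ} μ(O(ρ)) · c-occ(π,ρ⁻¹) = (n − 2h) · μ(O^{−(h+1)}(π⁻¹))`. -/
theorem shift_invariant_cylinder_identity
    (μ : Measure LinOrdZ) [IsProbabilityMeasure μ]
    (hshift : ∀ (k : ℕ), 1 ≤ k → ∀ (π : Equiv.Perm (Fin k)) (s : ℤ),
      μ (Oset π s) = μ (Oset π 0))
    {h : ℕ} (hh : 1 ≤ h) (π : Equiv.Perm (Fin (2 * h + 1)))
    {n : ℕ} (hn : 2 * h + 1 ≤ n) :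
    ∑ ρ : Equiv.Perm (Fin n), μ (Oset ρ 0) * (cOcc π ρ⁻¹ : ℝ≥0∞)
      = ((n - 2 * h : ℕ) : ℝ≥0∞) * μ (Oset π⁻¹ (-((h : ℤ) + 1))) := by
  classical
  have hterm : ∀ ρ : Equiv.Perm (Fin n),
      μ (Oset ρ 0) * (cOcc π ρ⁻¹ : ℝ≥0∞)
        = ∑ i ∈ Finset.range n,
            if i + (2 * h + 1) ≤ n ∧ WindowMatch π ρ⁻¹ i then μ (Oset ρ 0) else 0 := by
    intro ρ
    have hcard : (cOcc π ρ⁻¹ : ℕ)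
        = ∑ i ∈ Finset.range n,
            if i + (2 * h + 1) ≤ n ∧ WindowMatch π ρ⁻¹ i then 1 else 0 := by
      rw [cOcc, cOccWin, Finset.card_filter]
      refine Finset.sum_congr rfl fun i _ => ?_
      congr 1
      simp only [eq_iff_iff]
      constructor
      · rintro ⟨-, h1, h2⟩; exact ⟨h1, h2⟩
      · rintro ⟨h1, h2⟩; exact ⟨Nat.zero_le i, h1, h2⟩
    rw [hcard, Nat.cast_sum, Finset.mul_sum]
    refine Finset.sum_congr rfl fun i _ => ?_
    split_ifs <;> simp
  have hinner : ∀ i ∈ Finset.range n,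
      (∑ ρ : Equiv.Perm (Fin n),
          if i + (2 * h + 1) ≤ n ∧ WindowMatch π ρ⁻¹ i then μ (Oset ρ 0) else 0)
        = if i + (2 * h + 1) ≤ n then μ (Oset π⁻¹ (-((h : ℤ) + 1))) else 0 := by
    intro i _
    by_cases hik : i + (2 * h + 1) ≤ n
    · rw [if_pos hik]
      have hsimp : ∀ ρ : Equiv.Perm (Fin n),
          (if i + (2 * h + 1) ≤ n ∧ WindowMatch π ρ⁻¹ i then μ (Oset ρ 0) else 0)
            = if WindowMatch π ρ⁻¹ i then μ (Oset ρ 0) else 0 := fun ρ => by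
        simp [hik]
      rw [Finset.sum_congr rfl fun ρ _ => hsimp ρ, ← Finset.sum_filter,
        sum_Oset_eq π μ hik, hshift _ (by omega) π⁻¹ (i : ℤ),
        ← hshift _ (by omega) π⁻¹ (-((h : ℤ) + 1))]
    · rw [if_neg hik]
      exact Finset.sum_eq_zero fun ρ _ => by simp [hik]
  have hfilt : (Finset.range n).filter (fun i => i + (2 * h + 1) ≤ n)
      = Finset.range (n - 2 * h) := by
    ext i
    simp only [Finset.mem_filter, Finset.mem_range]
    omega
  calc ∑ ρ : Equiv.Perm (Fin n), μ (Oset ρ 0) * (cOcc π ρ⁻¹ : ℝ≥0∞)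
      = ∑ ρ : Equiv.Perm (Fin n), ∑ i ∈ Finset.range n,
          (if i + (2 * h + 1) ≤ n ∧ WindowMatch π ρ⁻¹ i then μ (Oset ρ 0) else 0) :=
        Finset.sum_congr rfl fun ρ _ => hterm ρ
    _ = ∑ i ∈ Finset.range n, ∑ ρ : Equiv.Perm (Fin n),
          (if i + (2 * h + 1) ≤ n ∧ WindowMatch π ρ⁻¹ i then μ (Oset ρ 0) else 0) :=
        Finset.sum_comm
    _ = ∑ i ∈ Finset.range n,
          (if i + (2 * h + 1) ≤ n then μ (Oset π⁻¹ (-((h : ℤ) + 1))) else 0) :=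
        Finset.sum_congr rfl hinner
    _ = ∑ i ∈ (Finset.range n).filter (fun i => i + (2 * h + 1) ≤ n),
          μ (Oset π⁻¹ (-((h : ℤ) + 1))) := (Finset.sum_filter _ _).symm
    _ = ((n - 2 * h : ℕ) : ℝ≥0∞) * μ (Oset π⁻¹ (-((h : ℤ) + 1))) := by
        rw [hfilt, Finset.sum_const, Finset.card_range, nsmul_eq_mul]
end
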